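/- The minimum flow decomposition problem with integer (possibly negative) path weights on DAGs reduces to the minimum cost circulation decomposition problem: given an s-t DAG G with flow X, adding an edge (t,s) with flow value |X|, cost 1 on (t,s) and cost 0 on all other edges yields a graph G' with circulation X' such that the minimum size of a flow decomposition of (G,X) equals the minimum cost of a circulation decomposition of (G',X'). -/

import Mathlib

open Finset

def IsWalk {V E : Type} (src tgt : E → V) : V → V → List E → Prop
  | a, b, [] => a = b
  | a, b, e :: L => src e = a ∧ IsWalk src tgt (tgt e) b L

def IsPath {V E : Type} (src tgt : E → V) (s t : V) (L : List E) : Prop :=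
  L ≠ [] ∧ IsWalk src tgt s t L

def IsDAG {V E : Type} (src tgt : E → V) : Prop :=
  ∀ (v : V) (L : List E), L ≠ [] → ¬ IsWalk src tgt v v L

/-- An integer flow: conservation at every internal vertex. -/
def IsFlowZ {V E : Type} [Fintype E] [DecidableEq V] (src tgt : E → V) (s t : V)
    (X : E → ℤ) : Prop :=
  ∀ v : V, v ≠ s → v ≠ t →
    (∑ e, if tgt e = v then X e else 0) = ∑ e, if src e = v then X e else 0

def IsCircZ {V E : Type} [Fintype E] [DecidableEq V] (src tgt : E → V) (X : E → ℤ) : Prop :=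
  ∀ v : V, (∑ e, if tgt e = v then X e else 0) = ∑ e, if src e = v then X e else 0

/-- The minimum size of a flow decomposition of `X` into integer-weighted `s`-`t` paths. -/
noncomputable def mfdZ {V E : Type} [Fintype E] [DecidableEq E] (src tgt : E → V)
    (s t : V) (X : E → ℤ) : ℕ :=
  sInf {k | ∃ (P : Fin k → List E) (w : Fin k → ℤ),
    (∀ i, IsPath src tgt s t (P i)) ∧
    ∀ e, X e = ∑ i, if e ∈ P i then w i else 0}

section aux
variable {V E : Type}

lemma isWalk_append (src tgt : E → V) {a b : V} {L1 L2 : List E} :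
    IsWalk src tgt a b (L1 ++ L2) ↔ ∃ c, IsWalk src tgt a c L1 ∧ IsWalk src tgt c b L2 := by
  induction L1 generalizing a with
  | nil =>
    simp only [List.nil_append]
    constructor
    · intro h; exact ⟨a, rfl, h⟩
    · rintro ⟨c, h1, h⟩
      cases h1
      exact h
  | cons e L ih =>
    constructor
    · rintro ⟨he, hw⟩
      obtain ⟨c, h1, h2⟩ := ih.mp hw
      exact ⟨c, ⟨he, h1⟩, h2⟩
    · rintro ⟨c, ⟨he, h1⟩, h2⟩
      exact ⟨he, ih.mpr ⟨c, h1, h2⟩⟩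

lemma walk_nodup {src tgt : E → V} (hdag : IsDAG src tgt) :
    ∀ {a b : V} {L : List E}, IsWalk src tgt a b L → L.Nodup := by
  intro a b L
  induction L generalizing a with
  | nil => intro _; exact List.nodup_nil
  | cons e L ih =>
    rintro ⟨he, hw⟩
    rw [List.nodup_cons]
    refine ⟨fun hmem => ?_, ih hw⟩
    obtain ⟨L2, L3, rfl⟩ := List.append_of_mem hmem
    rw [isWalk_append] at hw
    obtain ⟨c, h2, h3⟩ := hw
    exact hdag (tgt e) (L2 ++ [e]) (by simp)
      ((isWalk_append src tgt).mpr ⟨c, h2, h3.1, rfl⟩)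

lemma walk_count [DecidableEq V] (src tgt : E → V) {a b : V} {L : List E}
    (h : IsWalk src tgt a b L) (v : V) :
    (L.map fun e => if tgt e = v then (1:ℤ) else 0).sum + (if a = v then 1 else 0) =
    (L.map fun e => if src e = v then (1:ℤ) else 0).sum + (if b = v then 1 else 0) := by
  induction L generalizing a with
  | nil => cases h; simp
  | cons e L ih =>
    obtain ⟨he, hw⟩ := h
    have h2 := ih hw
    subst he
    simp only [List.map_cons, List.sum_cons]
    linarith

lemma walk_last {src tgt : E → V} :
    ∀ {a b : V} {L : List E}, IsWalk src tgt a b L → L ≠ [] → ∃ e ∈ L, tgt e = b := by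
  intro a b L
  induction L generalizing a with
  | nil => intro _ h; simp at h
  | cons e L ih =>
    rintro ⟨he, hw⟩ _
    cases L with
    | nil => exact ⟨e, by simp, hw⟩
    | cons f L' =>
      obtain ⟨g, hg, hgb⟩ := ih hw (by simp)
      exact ⟨g, by simp [List.mem_cons] at hg ⊢; tauto, hgb⟩

lemma sum_ite_mem_list [Fintype E] [DecidableEq E] {L : List E} (hL : L.Nodup) (f : E → ℤ) :
    (∑ e, if e ∈ L then f e else 0) = (L.map f).sum := by
  rw [show (fun e => if e ∈ L then f e else 0) = fun e => if e ∈ L.toFinset then f e else 0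
    from funext fun e => by simp]
  rw [Finset.sum_ite_mem, Finset.univ_inter, List.sum_toFinset f hL]

lemma list_sum_ite_const {p : E → Prop} [DecidablePred p] (L : List E) (c : ℤ) :
    (L.map fun e => if p e then c else 0).sum = c * (L.map fun e => if p e then (1:ℤ) else 0).sum := by
  induction L with
  | nil => simp
  | cons e L ih =>
    simp only [List.map_cons, List.sum_cons, ih, mul_add]
    congr 1
    split <;> simp



section circ
variable {V E : Type} [Fintype E] [DecidableEq V] [DecidableEq E]
variable {src tgt : E → V} {s t : V}

/-- indicator circulation of a path together with the back edge `none`. -/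
def pathCirc (L : List E) : Option E → ℤ :=
  fun o => o.elim 1 (fun e => if e ∈ L then 1 else 0)

lemma circ_eq {Y : Option E → ℤ}
    (hc : IsCircZ (fun e : Option E => e.elim t src) (fun e => e.elim s tgt) Y) (v : V) :
    ((if s = v then Y none else 0) + ∑ e, if tgt e = v then Y (some e) else 0)
      = (if t = v then Y none else 0) + ∑ e, if src e = v then Y (some e) else 0 := by
  have h := hc v
  rw [Fintype.sum_option, Fintype.sum_option] at h
  exact h

lemma pathCirc_circ (hdag : IsDAG src tgt) {L : List E} (hL : IsWalk src tgt s t L) :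
    IsCircZ (fun e : Option E => e.elim t src) (fun e => e.elim s tgt) (pathCirc L) := by
  intro v
  have hnd := walk_nodup hdag hL
  rw [Fintype.sum_option, Fintype.sum_option]
  simp only [pathCirc, Option.elim_none, Option.elim_some]
  have h1 : ∀ g : E → V, (∑ e, if g e = v then (if e ∈ L then (1:ℤ) else 0) else 0)
      = (L.map fun e => if g e = v then (1:ℤ) else 0).sum := by
    intro g
    rw [show (fun e => if g e = v then (if e ∈ L then (1:ℤ) else 0) else 0)
        = fun e => if e ∈ L then (if g e = v then (1:ℤ) else 0) else 0
      from funext fun e => by split <;> split <;> simp_all]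
    exact sum_ite_mem_list hnd _
  show ((if s = v then 1 else 0) + ∑ e, if tgt e = v then (if e ∈ L then (1:ℤ) else 0) else 0)
    = (if t = v then 1 else 0) + ∑ e, if src e = v then (if e ∈ L then (1:ℤ) else 0) else 0
  rw [h1, h1]
  have h2 := walk_count src tgt hL v
  linarith

lemma circ_sub {V' E' : Type} [Fintype E'] [DecidableEq V'] {sr tg : E' → V'} {Y Z : E' → ℤ}
    (hY : IsCircZ sr tg Y) (hZ : IsCircZ sr tg Z) : IsCircZ sr tg (Y - Z) := by
  intro v
  have key : ∀ g : E' → V', (∑ e, if g e = v then (Y - Z) e else 0)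
      = (∑ e, if g e = v then Y e else 0) - (∑ e, if g e = v then Z e else 0) := by
    intro g
    rw [← Finset.sum_sub_distrib]
    exact Finset.sum_congr rfl fun e _ => by by_cases h : g e = v <;> simp [h]
  rw [key, key, hY v, hZ v]

lemma exists_pos_term {f : E → ℤ} (hpos : 0 < ∑ e, f e) : ∃ e, 0 < f e := by
  by_contra h
  push_neg at h
  have := Finset.sum_nonpos (s := Finset.univ) fun e _ => h e
  linarith

variable {Y : Option E → ℤ}

lemma follow (hs : ∀ e, tgt e ≠ s)
    (hc : IsCircZ (fun e : Option E => e.elim t src) (fun e => e.elim s tgt) Y)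
    (hnn : ∀ o, 0 ≤ Y o) {e : E} (he : 0 < Y (some e)) :
    tgt e = t ∨ ∃ e', src e' = tgt e ∧ 0 < Y (some e') := by
  by_cases h : tgt e = t
  · exact Or.inl h
  right
  have h1 := circ_eq hc (tgt e)
  rw [if_neg (fun hh => hs e hh.symm), if_neg (fun hh => h hh.symm)] at h1
  have hterm : Y (some e) ≤ ∑ e', if tgt e' = tgt e then Y (some e') else 0 := by
    have := Finset.single_le_sum (f := fun e' => if tgt e' = tgt e then Y (some e') else 0)
      (fun e' _ => by split <;> [exact hnn _; exact le_rfl]) (Finset.mem_univ e)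
    simpa using this
  have hpos : 0 < ∑ e', if src e' = tgt e then Y (some e') else 0 := by linarith
  obtain ⟨e', he'⟩ := exists_pos_term hpos
  refine ⟨e', ?_, ?_⟩ <;> by_cases hh : src e' = tgt e <;> simp_all

lemma no_pos_into_t (ht : ∀ e, src e ≠ t) (hst : s ≠ t)
    (hc : IsCircZ (fun e : Option E => e.elim t src) (fun e => e.elim s tgt) Y)
    (hnn : ∀ o, 0 ≤ Y o) (h0 : Y none = 0) {e : E} (h : tgt e = t)
    (hpos : 0 < Y (some e)) : False := by
  have h1 := circ_eq hc t
  rw [if_neg hst, if_pos rfl, h0] at h1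
  have hsrc0 : (∑ e', if src e' = t then Y (some e') else 0) = 0 :=
    Finset.sum_eq_zero fun e' _ => if_neg (ht e')
  have hterm : Y (some e) ≤ ∑ e', if tgt e' = t then Y (some e') else 0 := by
    have := Finset.single_le_sum (f := fun e' => if tgt e' = t then Y (some e') else 0)
      (fun e' _ => by split <;> [exact hnn _; exact le_rfl]) (Finset.mem_univ e)
    simpa [h] using this
  linarith

lemma reach (hdag : IsDAG src tgt) (hs : ∀ e, tgt e ≠ s)
    (hc : IsCircZ (fun e : Option E => e.elim t src) (fun e => e.elim s tgt) Y)
    (hnn : ∀ o, 0 ≤ Y o) :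
    ∀ (n : ℕ) (a a0 : V) (L0 : List E), IsWalk src tgt a0 a L0 →
      (∀ e ∈ L0, 0 < Y (some e)) →
      (a = t ∨ ∃ e, src e = a ∧ 0 < Y (some e)) →
      L0.length + n = Fintype.card E + 1 →
      ∃ L, IsWalk src tgt a0 t (L0 ++ L) ∧ ∀ e ∈ L, 0 < Y (some e) := by
  intro n
  induction n with
  | zero =>
    intro a a0 L0 hw hpos hnext hlen
    rcases hnext with rfl | ⟨e, hsrc, hpose⟩
    · exact ⟨[], by simpa using hw, by simp⟩
    · exfalso
      have := (walk_nodup hdag hw).length_le_card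
      omega
  | succ n ih =>
    intro a a0 L0 hw hpos hnext hlen
    rcases hnext with rfl | ⟨e, hsrc, hpose⟩
    · exact ⟨[], by simpa using hw, by simp⟩
    · have hw' : IsWalk src tgt a0 (tgt e) (L0 ++ [e]) :=
        (isWalk_append _ _).mpr ⟨a, hw, hsrc, rfl⟩
      have hnext' := follow hs hc hnn hpose
      obtain ⟨L, hL, hLpos⟩ := ih (tgt e) a0 (L0 ++ [e]) hw'
        (by
          intro f hf
          rcases List.mem_append.mp hf with hf | hf
          · exact hpos f hf
          · simp at hf; subst hf; exact hpose)
        hnext' (by simp at hlen ⊢; omega)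
      rw [List.append_assoc] at hL
      refine ⟨e :: L, hL, ?_⟩
      intro f hf
      rcases List.mem_cons.mp hf with rfl | hf
      · exact hpose
      · exact hLpos f hf

lemma extract_path (hdag : IsDAG src tgt) (hs : ∀ e, tgt e ≠ s) (ht : ∀ e, src e ≠ t)
    (hst : s ≠ t)
    (hc : IsCircZ (fun e : Option E => e.elim t src) (fun e => e.elim s tgt) Y)
    (hnn : ∀ o, 0 ≤ Y o) (hpos : 0 < Y none) :
    ∃ L, IsPath src tgt s t L ∧ ∀ e ∈ L, 0 < Y (some e) := by
  have h1 := circ_eq hc s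
  rw [if_pos rfl, if_neg (Ne.symm hst)] at h1
  have htgt0 : (∑ e, if tgt e = s then Y (some e) else 0) = 0 :=
    Finset.sum_eq_zero fun e _ => if_neg (hs e)
  have hpos' : 0 < ∑ e, if src e = s then Y (some e) else 0 := by linarith
  obtain ⟨e0, he0⟩ := exists_pos_term hpos'
  have hsrc0 : src e0 = s := by by_contra h; simp [h] at he0
  have hpos0 : 0 < Y (some e0) := by simpa [hsrc0] using he0
  obtain ⟨L, hL, hLpos⟩ := reach hdag hs hc hnn (Fintype.card E) (tgt e0) s [e0]
    ⟨hsrc0, rfl⟩ (by simpa using hpos0) (follow hs hc hnn hpos0) (by simp [Nat.add_comm])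
  refine ⟨e0 :: L, ⟨by simp, hL⟩, ?_⟩
  intro f hf
  rcases List.mem_cons.mp hf with rfl | hf
  · exact hpos0
  · exact hLpos f hf

lemma circ_none_zero (hdag : IsDAG src tgt) (hs : ∀ e, tgt e ≠ s) (ht : ∀ e, src e ≠ t)
    (hst : s ≠ t)
    (hc : IsCircZ (fun e : Option E => e.elim t src) (fun e => e.elim s tgt) Y)
    (hnn : ∀ o, 0 ≤ Y o) (h0 : Y none = 0) : ∀ e, Y (some e) = 0 := by
  intro e
  by_contra he
  have hpos : 0 < Y (some e) := lt_of_le_of_ne (hnn _) (Ne.symm he)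
  obtain ⟨L, hL, hLpos⟩ := reach hdag hs hc hnn (Fintype.card E) (tgt e) (src e) [e]
    ⟨rfl, rfl⟩ (by simpa using hpos) (follow hs hc hnn hpos) (by simp [Nat.add_comm])
  obtain ⟨e1, he1, htgt1⟩ := walk_last hL (by simp)
  have hpos1 : 0 < Y (some e1) := by
    rcases List.mem_cons.mp he1 with rfl | he1
    · exact hpos
    · exact hLpos e1 he1
  exact no_pos_into_t ht hst hc hnn h0 htgt1 hpos1

end circ

section decompsec
variable {V E : Type} [Fintype E] [DecidableEq V] [DecidableEq E]
variable {src tgt : E → V} {s t : V}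

lemma decomp (hdag : IsDAG src tgt) (hs : ∀ e, tgt e ≠ s) (ht : ∀ e, src e ≠ t) (hst : s ≠ t) :
    ∀ (m : ℕ) (Y : Option E → ℤ),
      IsCircZ (fun e : Option E => e.elim t src) (fun e => e.elim s tgt) Y →
      (∀ o, 0 ≤ Y o) → Y none = m →
      ∃ P : Fin m → List E,
        (∀ j, IsPath src tgt s t (P j) ∧ (P j).Nodup) ∧
        ∀ e, Y (some e) = ∑ j, if e ∈ P j then 1 else 0 := by
  intro m
  induction m with
  | zero =>
    intro Y hc hnn h0
    refine ⟨Fin.elim0, fun j => j.elim0, fun e => ?_⟩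
    simp [circ_none_zero hdag hs ht hst hc hnn (by simpa using h0) e]
  | succ m ih =>
    intro Y hc hnn h0
    obtain ⟨L, hLpath, hLpos⟩ := extract_path hdag hs ht hst hc hnn
      (by rw [h0]; exact_mod_cast Nat.succ_pos m)
    have hnd : L.Nodup := walk_nodup hdag hLpath.2
    have hZc := pathCirc_circ hdag hLpath.2
    have hc' := circ_sub hc hZc
    have hnn' : ∀ o, 0 ≤ (Y - pathCirc L) o := by
      intro o
      cases o with
      | none =>
        simp only [Pi.sub_apply, pathCirc, Option.elim_none, h0]
        push_cast
        omega
      | some e =>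
        simp only [Pi.sub_apply, pathCirc, Option.elim_some]
        by_cases hmem : e ∈ L
        · have := hLpos e hmem
          simp [hmem]; omega
        · simp [hmem]; exact hnn _
    have h0' : (Y - pathCirc L) none = m := by
      simp only [Pi.sub_apply, pathCirc, Option.elim_none, h0]
      push_cast
      ring
    obtain ⟨P, hP, hsum⟩ := ih (Y - pathCirc L) hc' hnn' h0'
    refine ⟨Fin.cons L P, ?_, ?_⟩
    · intro j
      refine Fin.cases ?_ ?_ j
      · simpa [Fin.cons_zero] using ⟨hLpath, hnd⟩
      · intro j'; simpa [Fin.cons_succ] using hP j'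
    · intro e
      rw [Fin.sum_univ_succ]
      simp only [Fin.cons_zero, Fin.cons_succ]
      have h := hsum e
      simp only [Pi.sub_apply, pathCirc, Option.elim_some] at h
      by_cases hmem : e ∈ L <;> simp only [hmem, if_true, if_false] at h ⊢ <;> linarith

end decompsec





section helper
variable {V E : Type} [Fintype E] [DecidableEq V] [DecidableEq E]
variable {src tgt : E → V} {s t : V}

lemma path_src_count (hs : ∀ e, tgt e ≠ s) (hst : s ≠ t) {L : List E}
    (hL : IsWalk src tgt s t L) :
    (L.map fun e => if src e = s then (1:ℤ) else 0).sum = 1 := by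
  have h := walk_count src tgt hL s
  rw [if_pos rfl, if_neg (Ne.symm hst)] at h
  have h0 : (L.map fun e => if tgt e = s then (1:ℤ) else 0).sum = 0 := by
    apply List.sum_eq_zero
    intro x hx
    simp only [List.mem_map] at hx
    obtain ⟨e, _, rfl⟩ := hx
    exact if_neg (hs e)
  linarith

end helper


set_option maxHeartbeats 800000 in
/-- Adding an edge `(t,s)` of cost `1` (all original edges having cost `0`) carrying
the total flow value turns the flow `X` into a circulation `X'`, and the minimum size
of an integer-weight flow decomposition of `(G,X)` equals the minimum cost of an
integer-weight circulation decomposition of `(G',X')` into nonnegative circulations. -/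
theorem stmt_14 {V E : Type} [Fintype E] [DecidableEq V] [DecidableEq E]
    (src tgt : E → V) (s t : V)
    (hdag : IsDAG src tgt) (hs : ∀ e, tgt e ≠ s) (ht : ∀ e, src e ≠ t) (hst : s ≠ t)
    (X : E → ℤ) (hflow : IsFlowZ src tgt s t X) :
    mfdZ src tgt s t X =
      sInf {n : ℕ | ∃ (k : ℕ) (Y : Fin k → Option E → ℤ) (w : Fin k → ℤ),
        (∀ i, IsCircZ (fun e => e.elim t src) (fun e => e.elim s tgt) (Y i)) ∧
        (∀ i e, 0 ≤ Y i e) ∧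
        (∀ e : E, X e = ∑ i, w i * Y i (some e)) ∧
        ((∑ e, if src e = s then X e else 0) = ∑ i, w i * Y i none) ∧
        (n : ℤ) = ∑ i, Y i none} := by
  unfold mfdZ
  congr 1
  ext n
  simp only [Set.mem_setOf_eq]
  constructor
  · rintro ⟨P, w, hP, hX⟩
    have hnd : ∀ i, (P i).Nodup := fun i => walk_nodup hdag (hP i).2
    refine ⟨n, fun i => pathCirc (P i), w, ?_, ?_, ?_, ?_, ?_⟩
    · intro i; exact pathCirc_circ hdag (hP i).2
    · intro i o
      cases o with
      | none => simp [pathCirc]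
      | some e => simp only [pathCirc, Option.elim_some]; split <;> norm_num
    · intro e
      rw [hX e]
      refine Finset.sum_congr rfl fun i _ => ?_
      simp only [pathCirc, Option.elim_some, mul_ite, mul_one, mul_zero]
    · -- flow value
      have key : ∀ i : Fin n, (∑ e, if src e = s then (if e ∈ P i then w i else 0) else 0)
          = w i := by
        intro i
        rw [show (fun e => if src e = s then (if e ∈ P i then w i else 0) else 0)
            = fun e => if e ∈ P i then (if src e = s then w i else 0) else 0
          from funext fun e => by split <;> split <;> simp_all]
        rw [sum_ite_mem_list (hnd i), list_sum_ite_const, path_src_count hs hst (hP i).2,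
          mul_one]
      calc (∑ e, if src e = s then X e else 0)
          = ∑ e, ∑ i, (if src e = s then (if e ∈ P i then w i else 0) else 0) := by
            refine Finset.sum_congr rfl fun e _ => ?_
            rw [hX e]
            split <;> simp
        _ = ∑ i, ∑ e, (if src e = s then (if e ∈ P i then w i else 0) else 0) :=
            Finset.sum_comm
        _ = ∑ i, w i := Finset.sum_congr rfl fun i _ => key i
        _ = ∑ i, w i * pathCirc (P i) none := by simp [pathCirc]
    · simp [pathCirc]
  · rintro ⟨k, Y, w, hcirc, hnn, hXe, hval, hcost⟩
    have hmi : ∀ i, (((Y i none).toNat : ℤ)) = Y i none := fun i =>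
      Int.toNat_of_nonneg (hnn i none)
    choose P hPprop hPsum using fun i =>
      decomp hdag hs ht hst (Y i none).toNat (Y i) (hcirc i) (hnn i) (hmi i).symm
    have hn : n = ∑ i, (Y i none).toNat := by
      have h2 : (n:ℤ) = ((∑ i, (Y i none).toNat : ℕ) : ℤ) := by
        rw [hcost]
        push_cast
        exact Finset.sum_congr rfl fun i _ => (hmi i).symm
      exact_mod_cast h2
    have hcard : Fintype.card (Σ i : Fin k, Fin ((Y i none).toNat)) = n := by
      simp [Fintype.card_sigma, hn]
    let φ : (Σ i : Fin k, Fin ((Y i none).toNat)) ≃ Fin n := Fintype.equivFinOfCardEq hcard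
    refine ⟨fun j => P (φ.symm j).1 (φ.symm j).2, fun j => w (φ.symm j).1, ?_, ?_⟩
    · intro j; exact (hPprop _ _).1
    · intro e
      rw [hXe e]
      calc ∑ i, w i * Y i (some e)
          = ∑ i, ∑ j : Fin ((Y i none).toNat), (if e ∈ P i j then w i else 0) := by
            refine Finset.sum_congr rfl fun i _ => ?_
            rw [hPsum i e, Finset.mul_sum]
            exact Finset.sum_congr rfl fun j _ => by
              simp only [mul_ite, mul_one, mul_zero]
        _ = ∑ σ : (Σ i : Fin k, Fin ((Y i none).toNat)),
              (if e ∈ P σ.1 σ.2 then w σ.1 else 0) := by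
            rw [← Finset.univ_sigma_univ, Finset.sum_sigma]
        _ = ∑ j : Fin n, (if e ∈ P (φ.symm j).1 (φ.symm j).2 then w (φ.symm j).1 else 0) :=
            (Equiv.sum_comp φ.symm _).symm
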